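/- Let f be locally integrable on ℝ^p with ‖f‖_B < ∞. Then there is a constant C₂ such that for every δ ∈ (0,1) and every x̃ ∈ ℝ^p, ∫_{B(x̃, δ)} |f(x)| dx ≤ C₂ (1 + |x̃|)^p. Consequently there is C₃ < ∞ such that every ball of radius δ contains a point x' with |f(x')| ≤ C₃ δ^{-p} (1 + |x'|)^p. -/

import Mathlib

open MeasureTheory Filter

noncomputable section

def cube (p : ℕ) (T : ℝ) : Set (EuclideanSpace ℝ (Fin p)) :=
  {x | ∀ i, x i ∈ Set.Icc (-T) T}

def BNormFinite (p : ℕ) (f : EuclideanSpace ℝ (Fin p) → ℂ) : Prop :=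
  Filter.IsBoundedUnder (· ≤ ·) Filter.atTop
    (fun T : ℝ => (2*T)^(-(p:ℤ)) * ∫ x in cube p T, ‖f x‖)

lemma abs_coord_le_norm (p : ℕ) (x : EuclideanSpace ℝ (Fin p)) (i : Fin p) : |x i| ≤ ‖x‖ := by
  rw [EuclideanSpace.norm_eq]
  have h1 : |x i| = Real.sqrt (‖x i‖^2) := by
    rw [Real.sqrt_sq_eq_abs, Real.norm_eq_abs, abs_abs]
  rw [h1]
  exact Real.sqrt_le_sqrt (Finset.single_le_sum (f := fun j => ‖x j‖^2)
    (fun j _ => sq_nonneg _) (Finset.mem_univ i))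

lemma isCompact_cube (p : ℕ) (T : ℝ) : IsCompact (cube p T) := by
  have : cube p T = ⇑(EuclideanSpace.equiv (Fin p) ℝ).symm ''
      (Set.univ.pi fun _ => Set.Icc (-T) T) := by
    rw [ContinuousLinearEquiv.image_symm_eq_preimage]
    ext x
    constructor
    · intro h
      exact fun i _ => h i
    · intro h i
      exact h i (Set.mem_univ i)
  rw [this]
  exact (isCompact_univ_pi fun _ => isCompact_Icc).image
    (EuclideanSpace.equiv (Fin p) ℝ).symm.continuous

/-- local integral bounds and existence of points of polynomial
growth for functions with finite Besicovitch norm. -/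
theorem local_bounds_of_BNorm_finite (p : ℕ) (f : EuclideanSpace ℝ (Fin p) → ℂ)
    (hloc : LocallyIntegrable f volume) (hB : BNormFinite p f) :
    (∃ C₂ : ℝ, ∀ δ ∈ Set.Ioo (0:ℝ) 1, ∀ x₀ : EuclideanSpace ℝ (Fin p),
      (∫ x in Metric.ball x₀ δ, ‖f x‖) ≤ C₂ * (1 + ‖x₀‖)^p) ∧
    (∃ C₃ : ℝ, ∀ δ ∈ Set.Ioo (0:ℝ) 1, ∀ x₀ : EuclideanSpace ℝ (Fin p),
      ∃ x' ∈ Metric.ball x₀ δ, ‖f x'‖ ≤ C₃ * δ^(-(p:ℤ)) * (1 + ‖x'‖)^p) := by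
  obtain ⟨M, hM⟩ := hB
  rw [Filter.eventually_map] at hM
  obtain ⟨T₀, hT₀⟩ := Filter.eventually_atTop.mp hM
  set R : ℝ := max T₀ 1 with hRdef
  have hR1 : (1:ℝ) ≤ R := le_max_right _ _
  have hRT₀ : T₀ ≤ R := le_max_left _ _
  -- Part 1
  have h1 : ∀ δ ∈ Set.Ioo (0:ℝ) 1, ∀ x₀ : EuclideanSpace ℝ (Fin p),
      (∫ x in Metric.ball x₀ δ, ‖f x‖) ≤ (M * (2*R)^p) * (1 + ‖x₀‖)^p := by
    intro δ hδ x₀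
    set T : ℝ := max (‖x₀‖ + 1) R with hTdef
    have hT : T₀ ≤ T := hRT₀.trans (le_max_right _ _)
    have hTpos : (0:ℝ) < T := lt_of_lt_of_le one_pos (hR1.trans (le_max_right _ _))
    have hsub : Metric.ball x₀ δ ⊆ cube p T := by
      intro x hx i
      have h1 : |x i| ≤ ‖x‖ := abs_coord_le_norm p x i
      have h2 : ‖x‖ ≤ ‖x₀‖ + 1 := by
        have hd : dist x x₀ < δ := Metric.mem_ball.mp hx
        have : ‖x‖ - ‖x₀‖ ≤ ‖x - x₀‖ := norm_sub_norm_le x x₀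
        rw [← dist_eq_norm] at this
        linarith [hδ.2]
      have h3 : |x i| ≤ T := le_trans (h1.trans h2) (le_max_left _ _)
      exact ⟨neg_le_of_abs_le h3, le_of_abs_le h3⟩
    have hint : IntegrableOn (fun x => ‖f x‖) (cube p T) volume :=
      (hloc.integrableOn_isCompact (isCompact_cube p T)).norm
    have hmono : (∫ x in Metric.ball x₀ δ, ‖f x‖) ≤ ∫ x in cube p T, ‖f x‖ :=
      setIntegral_mono_set hint (Filter.Eventually.of_forall fun x => norm_nonneg _)
        (HasSubset.Subset.eventuallyLE hsub)
    have hbound := hT₀ T hT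
    have h2T : (0:ℝ) < 2*T := by linarith
    have hIpos : 0 ≤ ∫ x in cube p T, ‖f x‖ :=
      setIntegral_nonneg (isCompact_cube p T).isClosed.measurableSet fun x _ => norm_nonneg _
    rw [show ((2*T):ℝ)^(-(p:ℤ)) = ((2*T)^p)⁻¹ by rw [zpow_neg, zpow_natCast]] at hbound
    have hcube_le : (∫ x in cube p T, ‖f x‖) ≤ (2*T)^p * M := by
      rwa [inv_mul_le_iff₀ (by positivity)] at hbound
    have hM0 : 0 ≤ M := by
      have := hT₀ T hT
      have hpos : (0:ℝ) ≤ ((2*T):ℝ)^(-(p:ℤ)) * ∫ x in cube p T, ‖f x‖ := by positivity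
      linarith
    have hTle : T ≤ R * (1 + ‖x₀‖) := by
      have h0 : (0:ℝ) ≤ ‖x₀‖ := norm_nonneg _
      apply max_le
      · nlinarith
      · nlinarith
    have hpow : (2*T)^p ≤ (2*R)^p * (1 + ‖x₀‖)^p := by
      rw [← mul_pow]
      apply pow_le_pow_left₀ (by positivity)
      nlinarith [norm_nonneg x₀]
    calc (∫ x in Metric.ball x₀ δ, ‖f x‖) ≤ (2*T)^p * M := hmono.trans hcube_le
      _ ≤ ((2*R)^p * (1 + ‖x₀‖)^p) * M := by
          apply mul_le_mul_of_nonneg_right hpow hM0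
      _ = (M * (2*R)^p) * (1 + ‖x₀‖)^p := by ring
  refine ⟨⟨M * (2*R)^p, h1⟩, ?_⟩
  -- Part 2
  set C₂ : ℝ := M * (2*R)^p with hC₂def
  by_cases hp : p = 0
  · subst hp
    refine ⟨‖f 0‖, fun δ hδ x₀ => ⟨x₀, Metric.mem_ball_self hδ.1, ?_⟩⟩
    have hx₀ : x₀ = 0 := PiLp.ext fun i => i.elim0
    rw [hx₀]
    simp
  · haveI : Nonempty (Fin p) := ⟨⟨0, Nat.pos_of_ne_zero hp⟩⟩
    set v : ℝ := (volume (Metric.ball (0 : EuclideanSpace ℝ (Fin p)) 1)).toReal with hvdef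
    have hv : 0 < v :=
      ENNReal.toReal_pos (Metric.measure_ball_pos _ _ one_pos).ne' measure_ball_lt_top.ne
    set C₂' : ℝ := max C₂ 0 with hC₂'def
    have hC₂'0 : 0 ≤ C₂' := le_max_right _ _
    refine ⟨(C₂' + 1) * 2^p / v, fun δ hδ x₀ => ?_⟩
    by_contra hcon
    push_neg at hcon
    set C₃ : ℝ := (C₂' + 1) * 2^p / v with hC₃def
    have hC₃pos : 0 < C₃ := div_pos (by positivity) hv
    have hδ0 : 0 < δ := hδ.1
    have hδp : (0:ℝ) < δ ^ p := by positivity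
    have hδz : δ^(-(p:ℤ)) = (δ^p)⁻¹ := by rw [zpow_neg, zpow_natCast]
    set c : ℝ := C₃ * (δ^p)⁻¹ * ((1 + ‖x₀‖)/2)^p with hcdef
    have hconst : ∀ x ∈ Metric.ball x₀ δ, c ≤ ‖f x‖ := by
      intro x hx
      have hd : dist x x₀ < δ := Metric.mem_ball.mp hx
      have h2 : (1 + ‖x₀‖)/2 ≤ 1 + ‖x‖ := by
        have : ‖x₀‖ - ‖x‖ ≤ ‖x₀ - x‖ := norm_sub_norm_le x₀ x
        rw [← dist_eq_norm, dist_comm] at this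
        have hx0 : (0:ℝ) ≤ ‖x‖ := norm_nonneg _
        linarith [hδ.2]
      have hpow2 : ((1 + ‖x₀‖)/2)^p ≤ (1 + ‖x‖)^p :=
        pow_le_pow_left₀ (by positivity) h2 p
      have hle : c ≤ C₃ * δ^(-(p:ℤ)) * (1 + ‖x‖)^p := by
        rw [hδz]
        exact mul_le_mul_of_nonneg_left hpow2 (by positivity)
      exact hle.trans (hcon x hx).le
    have hintball : IntegrableOn (fun x => ‖f x‖) (Metric.ball x₀ δ) volume :=
      ((hloc.integrableOn_isCompact (isCompact_closedBall x₀ δ)).mono_set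
        Metric.ball_subset_closedBall).norm
    have hlow : c * (volume (Metric.ball x₀ δ)).toReal ≤ ∫ x in Metric.ball x₀ δ, ‖f x‖ :=
      setIntegral_ge_of_const_le_real Metric.isOpen_ball.measurableSet
        measure_ball_lt_top.ne hconst hintball
    have hvol : (volume (Metric.ball x₀ δ)).toReal = δ^p * v := by
      rw [Measure.addHaar_ball volume x₀ hδ0.le, finrank_euclideanSpace_fin,
        ENNReal.toReal_mul, ENNReal.toReal_ofReal (by positivity)]
    have hup : (∫ x in Metric.ball x₀ δ, ‖f x‖) ≤ C₂' * (1 + ‖x₀‖)^p := by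
      refine (h1 δ hδ x₀).trans ?_
      exact mul_le_mul_of_nonneg_right (le_max_left _ _) (by positivity)
    have heq : c * (δ^p * v) = (C₂' + 1) * (1 + ‖x₀‖)^p := by
      rw [hcdef, hC₃def, div_pow]
      have h2p : ((2:ℝ))^p ≠ 0 := by positivity
      field_simp
    have hXp : (0:ℝ) < (1 + ‖x₀‖)^p := by positivity
    rw [hvol] at hlow
    rw [heq] at hlow
    nlinarith [hlow.trans hup]

end
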